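/- Let p and q be distinct primes, let α, β be positive integers, let ε be a natural number with β > ε and (β − α)/2 ≥ ε, and set n = p^α·q^β and m = p^{α+ε}·q^{β−ε}. Then 0 ≤ H(m) − H(n) ≤ (α·log α + β·log β)/(α + β) − log((α + β)/2). -/

import Mathlib

/-- The entropy of a positive integer `n ≥ 2` with prime factorization
`n = p_1^{α_1} ⋯ p_r^{α_r}`: `H(n) = log Ω(n) − (1/Ω(n)) ∑ α_i log α_i`,
where `Ω(n)` counts prime factors with multiplicity. -/
noncomputable def numEntropy (n : ℕ) : ℝ :=
  Real.log (n.primeFactorsList.length : ℝ) -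
    (1 / (n.primeFactorsList.length : ℝ)) *
      ∑ p ∈ n.primeFactors, (n.factorization p : ℝ) * Real.log (n.factorization p)

lemma entropy_key (a b c d : ℝ) (ha : 0 ≤ a) (hac : a ≤ c) (hcd : c ≤ d) (hdb : d ≤ b)
    (hsum : a + b = c + d) :
    c * Real.log c + d * Real.log d ≤ a * Real.log a + b * Real.log b := by
  rcases eq_or_lt_of_le (hac.trans (hcd.trans hdb)) with h | hab
  · have h1 : c = a := le_antisymm (by linarith) hac
    have h2 : d = b := by linarith
    rw [h1, h2]
  · have hba : (0:ℝ) < b - a := by linarith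
    set t : ℝ := (b - c) / (b - a) with ht
    have ht0 : 0 ≤ t := div_nonneg (by linarith) hba.le
    have ht1 : t ≤ 1 := by rw [div_le_one hba]; linarith
    have hc : c = t * a + (1 - t) * b := by rw [ht]; field_simp [hba.ne']; ring
    have hd : d = (1 - t) * a + t * b := by
      have : d = a + b - c := by linarith
      rw [this, hc]; ring
    have H := Real.convexOn_mul_log.2 (Set.mem_Ici.2 ha) (Set.mem_Ici.2 (by linarith : (0:ℝ) ≤ b))
      ht0 (by linarith) (by ring : t + (1 - t) = 1)
    have H2 := Real.convexOn_mul_log.2 (Set.mem_Ici.2 ha) (Set.mem_Ici.2 (by linarith : (0:ℝ) ≤ b))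
      (by linarith) ht0 (by ring : (1 - t) + t = 1)
    simp only [smul_eq_mul] at H H2
    rw [← hc] at H
    rw [← hd] at H2
    nlinarith [H, H2]

lemma numEntropy_prime_pow_mul (p q : ℕ) (hp : p.Prime) (hq : q.Prime) (hpq : p ≠ q)
    (a b : ℕ) (ha : 0 < a) (hb : 0 < b) :
    numEntropy (p ^ a * q ^ b)
      = Real.log ((a : ℝ) + b) -
        (1 / ((a : ℝ) + b)) * ((a : ℝ) * Real.log a + (b : ℝ) * Real.log b) := by
  have hp0 : p ^ a ≠ 0 := pow_ne_zero _ hp.pos.ne'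
  have hq0 : q ^ b ≠ 0 := pow_ne_zero _ hq.pos.ne'
  have hlen : (p ^ a * q ^ b).primeFactorsList.length = a + b := by
    rw [← ArithmeticFunction.cardFactors_apply, ArithmeticFunction.cardFactors_mul hp0 hq0,
      ArithmeticFunction.cardFactors_apply_prime_pow hp,
      ArithmeticFunction.cardFactors_apply_prime_pow hq]
  have hpf : (p ^ a * q ^ b).primeFactors = {p, q} := by
    rw [Nat.primeFactors_mul hp0 hq0, Nat.primeFactors_pow _ ha.ne',
      Nat.primeFactors_pow _ hb.ne', hp.primeFactors, hq.primeFactors]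
    rfl
  have hfac : (p ^ a * q ^ b).factorization = Finsupp.single p a + Finsupp.single q b := by
    rw [Nat.factorization_mul hp0 hq0, hp.factorization_pow, hq.factorization_pow]
  have hfp : (p ^ a * q ^ b).factorization p = a := by
    simp [hfac, Finsupp.single_apply, hpq.symm]
  have hfq : (p ^ a * q ^ b).factorization q = b := by
    simp [hfac, Finsupp.single_apply, hpq]
  unfold numEntropy
  rw [hlen, hpf, Finset.sum_pair hpq, hfp, hfq]
  push_cast
  ring

theorem entropy_diff_nonneg_and_le (p q α β ε : ℕ) (hp : p.Prime) (hq : q.Prime)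
    (hpq : p ≠ q) (hα : 0 < α) (hβ : 0 < β) (hε : ε < β)
    (hε2 : (ε : ℝ) ≤ ((β : ℝ) - (α : ℝ)) / 2)
    (n m : ℕ) (hn : n = p ^ α * q ^ β) (hm : m = p ^ (α + ε) * q ^ (β - ε)) :
    0 ≤ numEntropy m - numEntropy n ∧
      numEntropy m - numEntropy n ≤
        ((α : ℝ) * Real.log α + (β : ℝ) * Real.log β) / ((α : ℝ) + β) -
          Real.log (((α : ℝ) + β) / 2) := by
  have hβε : 0 < β - ε := Nat.sub_pos_of_lt hε
  have hcast : ((β - ε : ℕ) : ℝ) = (β : ℝ) - ε := by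
    push_cast [Nat.cast_sub hε.le]; ring
  have hEn : numEntropy n = Real.log ((α : ℝ) + β) -
      (1 / ((α : ℝ) + β)) * ((α : ℝ) * Real.log α + (β : ℝ) * Real.log β) := by
    rw [hn, numEntropy_prime_pow_mul p q hp hq hpq α β hα hβ]
  have hEm : numEntropy m = Real.log ((α : ℝ) + β) -
      (1 / ((α : ℝ) + β)) *
        (((α : ℝ) + ε) * Real.log ((α : ℝ) + ε) +
          ((β : ℝ) - ε) * Real.log ((β : ℝ) - ε)) := by
    rw [hm, numEntropy_prime_pow_mul p q hp hq hpq (α + ε) (β - ε)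
      (Nat.lt_of_lt_of_le hα (Nat.le_add_right _ _)) hβε]
    rw [hcast]
    push_cast
    have : (α : ℝ) + ε + ((β : ℝ) - ε) = (α : ℝ) + β := by ring
    rw [this]
  have hα1 : (1:ℝ) ≤ (α : ℝ) := by exact_mod_cast hα
  have hβ1 : (1:ℝ) ≤ (β : ℝ) := by exact_mod_cast hβ
  have hε0 : (0:ℝ) ≤ (ε : ℝ) := Nat.cast_nonneg ε
  have hsum : (α : ℝ) + β = ((α : ℝ) + ε) + ((β : ℝ) - ε) := by ring
  have hABpos : (0:ℝ) < (α : ℝ) + β := by linarith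
  -- upper bound on inner-sum for m : convexity
  have h1 : ((α : ℝ) + ε) * Real.log ((α : ℝ) + ε) + ((β : ℝ) - ε) * Real.log ((β : ℝ) - ε)
      ≤ (α : ℝ) * Real.log α + (β : ℝ) * Real.log β :=
    entropy_key (α : ℝ) (β : ℝ) ((α : ℝ) + ε) ((β : ℝ) - ε)
      (by linarith) (by linarith) (by linarith) (by linarith) hsum
  -- lower bound via midpoint
  set mid : ℝ := ((α : ℝ) + β) / 2 with hmid
  have h2 : mid * Real.log mid + mid * Real.log mid
      ≤ ((α : ℝ) + ε) * Real.log ((α : ℝ) + ε) + ((β : ℝ) - ε) * Real.log ((β : ℝ) - ε) :=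
    entropy_key ((α : ℝ) + ε) ((β : ℝ) - ε) mid mid
      (by linarith) (by rw [hmid]; linarith) le_rfl (by rw [hmid]; linarith)
      (by rw [hmid]; ring)
  constructor
  · rw [hEm, hEn]
    have hinv : (0:ℝ) ≤ 1 / ((α : ℝ) + β) := by positivity
    nlinarith [h1]
  · rw [hEm, hEn]
    have hdiff : (Real.log ((α : ℝ) + β) -
        (1 / ((α : ℝ) + β)) * (((α : ℝ) + ε) * Real.log ((α : ℝ) + ε) +
          ((β : ℝ) - ε) * Real.log ((β : ℝ) - ε))) -
        (Real.log ((α : ℝ) + β) -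
        (1 / ((α : ℝ) + β)) * ((α : ℝ) * Real.log α + (β : ℝ) * Real.log β))
        = (1 / ((α : ℝ) + β)) * (((α : ℝ) * Real.log α + (β : ℝ) * Real.log β) -
            (((α : ℝ) + ε) * Real.log ((α : ℝ) + ε) +
              ((β : ℝ) - ε) * Real.log ((β : ℝ) - ε))) := by ring
    rw [hdiff]
    have hrhs : ((α : ℝ) * Real.log α + (β : ℝ) * Real.log β) / ((α : ℝ) + β) -
        Real.log mid
        = (1 / ((α : ℝ) + β)) * (((α : ℝ) * Real.log α + (β : ℝ) * Real.log β) -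
            (mid * Real.log mid + mid * Real.log mid)) := by
      field_simp
      ring
    rw [hrhs]
    apply mul_le_mul_of_nonneg_left _ (by positivity)
    linarith
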